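/- For every unit vector ψ in H₁⊗⋯⊗Hₙ, where H₁, …, Hₙ are nonzero finite-dimensional complex inner product spaces, there exist unit vectors a₁ ∈ H₁, …, aₙ ∈ Hₙ such that for every index k and every vector b ∈ Hₖ with b ⊥ aₖ one has ⟨a₁⊗⋯⊗b⊗⋯⊗aₙ, ψ⟩ = 0 (the vector a₁⊗⋯⊗b⊗⋯⊗aₙ is obtained by replacing the k-th factor aₖ with b). Moreover a₁⊗⋯⊗aₙ can be chosen to maximize |⟨a₁⊗⋯⊗aₙ, ψ⟩| over all product states. -/

import Mathlib

open scoped ComplexInnerProductSpace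

/-- The product state `a₁ ⊗ ⋯ ⊗ aₙ` of `n` parties with local dimensions `d k`, as a vector
in `H₁ ⊗ ⋯ ⊗ Hₙ ≃ ℂ^(Π k, d k)` with the standard inner product, so that
`⟪prodState a, prodState x⟫ = ∏ k, ⟪a k, x k⟫`. -/
noncomputable def prodState {n : ℕ} {d : Fin n → ℕ}
    (a : ∀ k, EuclideanSpace ℂ (Fin (d k))) :
    EuclideanSpace ℂ (∀ k, Fin (d k)) :=
  WithLp.toLp 2 (fun f => ∏ k, a k (f k))

open Finset in
lemma prodState_update_apply {n : ℕ} {d : Fin n → ℕ}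
    (a : ∀ k, EuclideanSpace ℂ (Fin (d k))) (k : Fin n)
    (b : EuclideanSpace ℂ (Fin (d k))) (f : ∀ j, Fin (d j)) :
    prodState (Function.update a k b) f
      = b (f k) * ∏ j ∈ univ.erase k, a j (f j) := by
  unfold prodState
  simp only [WithLp.ofLp_toLp]
  rw [← Finset.mul_prod_erase univ _ (mem_univ k)]
  simp only [Function.update_self]
  exact congrArg _ (Finset.prod_congr rfl fun j hj => by
    rw [Function.update_of_ne (Finset.ne_of_mem_erase hj)])

open Finset in
/-- The Riesz vector for the conjugate-linear functional
`b ↦ ⟪prodState (Function.update a k b), ψ⟫`. -/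
lemma exists_riesz_vector {n : ℕ} {d : Fin n → ℕ}
    (a : ∀ k, EuclideanSpace ℂ (Fin (d k))) (k : Fin n)
    (ψ : EuclideanSpace ℂ (∀ k, Fin (d k))) :
    ∃ w : EuclideanSpace ℂ (Fin (d k)),
      ∀ b : EuclideanSpace ℂ (Fin (d k)),
        ⟪prodState (Function.update a k b), ψ⟫ = ⟪b, w⟫ := by
  classical
  refine ⟨WithLp.toLp 2 (fun i => ∑ f : ∀ j, Fin (d j),
      if f k = i then (starRingEnd ℂ) (∏ j ∈ univ.erase k, a j (f j)) * ψ f else 0), fun b => ?_⟩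
  have hL : ⟪prodState (Function.update a k b), ψ⟫
      = ∑ f : ∀ j, Fin (d j), (starRingEnd ℂ) (b (f k)) *
          ((starRingEnd ℂ) (∏ j ∈ univ.erase k, a j (f j)) * ψ f) := by
    simp only [PiLp.inner_apply, RCLike.inner_apply']
    exact Finset.sum_congr rfl fun f _ => by
      rw [prodState_update_apply, map_mul, mul_assoc]
  rw [hL]
  simp only [PiLp.inner_apply, RCLike.inner_apply', WithLp.ofLp_toLp]
  rw [show (∑ i : Fin (d k), (starRingEnd ℂ) (b i) * ∑ f : ∀ j, Fin (d j),
        if f k = i then (starRingEnd ℂ) (∏ j ∈ univ.erase k, a j (f j)) * ψ f else 0)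
      = ∑ i : Fin (d k), ∑ f : ∀ j, Fin (d j), (if f k = i then
          (starRingEnd ℂ) (b i) * ((starRingEnd ℂ) (∏ j ∈ univ.erase k, a j (f j)) * ψ f) else 0)
    from Finset.sum_congr rfl fun i _ => by
      rw [Finset.mul_sum]
      exact Finset.sum_congr rfl fun f _ => by split <;> simp]
  rw [Finset.sum_comm]
  exact Finset.sum_congr rfl fun f _ => by rw [Finset.sum_ite_eq]; simp

/-- For every unit vector `ψ` in `H₁ ⊗ ⋯ ⊗ Hₙ` (nonzero local dimensions `d k`) there are unit
vectors `a₁, …, aₙ` whose product state maximizes the overlap with `ψ` over all product states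
and such that replacing any single factor `aₖ` by a vector orthogonal to it yields a product
vector orthogonal to `ψ`. -/
theorem exists_maximizing_product_state (n : ℕ) (d : Fin n → ℕ) (hd : ∀ k, 0 < d k)
    (ψ : EuclideanSpace ℂ (∀ k, Fin (d k))) (hψ : ‖ψ‖ = 1) :
    ∃ a : ∀ k, EuclideanSpace ℂ (Fin (d k)),
      (∀ k, ‖a k‖ = 1) ∧
      (∀ (k : Fin n) (b : EuclideanSpace ℂ (Fin (d k))), ⟪b, a k⟫ = 0 →
        ⟪prodState (Function.update a k b), ψ⟫ = 0) ∧
      (∀ c : ∀ k, EuclideanSpace ℂ (Fin (d k)), (∀ k, ‖c k‖ = 1) →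
        ‖⟪prodState c, ψ⟫‖ ≤ ‖⟪prodState a, ψ⟫‖) := by
  classical
  -- the compact set of tuples of unit vectors
  set S : Set (∀ k, EuclideanSpace ℂ (Fin (d k))) :=
    Set.univ.pi fun k => Metric.sphere 0 1 with hS
  have hmemS : ∀ x : ∀ k, EuclideanSpace ℂ (Fin (d k)), x ∈ S ↔ ∀ k, ‖x k‖ = 1 := by
    intro x
    simp [hS, Set.mem_pi, mem_sphere_iff_norm]
  have hScompact : IsCompact S := isCompact_univ_pi fun k => isCompact_sphere 0 1
  have hSne : S.Nonempty := by
    refine ⟨fun k => EuclideanSpace.single ⟨0, hd k⟩ 1, ?_⟩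
    rw [hmemS]
    intro k
    simp [EuclideanSpace.norm_single]
  -- continuity of the overlap
  have hcont : Continuous fun x : ∀ k, EuclideanSpace ℂ (Fin (d k)) =>
      ‖⟪prodState x, ψ⟫‖ := by
    have h1 : (fun x : ∀ k, EuclideanSpace ℂ (Fin (d k)) => ⟪prodState x, ψ⟫)
        = fun x => ∑ f : ∀ j, Fin (d j), (starRingEnd ℂ) (∏ k, x k (f k)) * ψ f := by
      funext x
      simp [PiLp.inner_apply, RCLike.inner_apply', prodState]
      exact Finset.sum_congr rfl fun _ _ => mul_comm _ _
    refine Continuous.norm ?_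
    rw [h1]
    refine continuous_finset_sum _ fun f _ => Continuous.mul ?_ continuous_const
    refine Continuous.star ?_
    exact continuous_finset_prod _ fun k _ =>
      (EuclideanSpace.proj (f k)).continuous.comp (continuous_apply k)
  obtain ⟨a, haS, hamax⟩ := hScompact.exists_isMaxOn hSne hcont.continuousOn
  have ha1 : ∀ k, ‖a k‖ = 1 := (hmemS a).1 haS
  refine ⟨a, ha1, ?_, ?_⟩
  · intro k b hb
    obtain ⟨w, hw⟩ := exists_riesz_vector a k ψ
    have hak : ⟪prodState a, ψ⟫ = ⟪a k, w⟫ := by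
      rw [← hw (a k), Function.update_eq_self]
    by_cases hw0 : w = 0
    · rw [hw b, hw0, inner_zero_right]
    · -- plugging in the normalized w shows Cauchy–Schwarz equality for ⟪a k, w⟫
      have hwnorm : (0 : ℝ) < ‖w‖ := norm_pos_iff.mpr hw0
      set u : EuclideanSpace ℂ (Fin (d k)) := ((‖w‖ : ℂ))⁻¹ • w with hu
      have hunorm : ‖u‖ = 1 := by
        rw [hu, norm_smul]
        simp [norm_inv, abs_of_pos hwnorm, inv_mul_cancel₀ (ne_of_gt hwnorm)]
      have hmemu : Function.update a k u ∈ S := by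
        rw [hmemS]
        intro j
        by_cases hj : j = k
        · subst hj; simp [hunorm]
        · rw [Function.update_of_ne hj]; exact ha1 j
      have hle : ‖⟪u, w⟫‖ ≤ ‖⟪a k, w⟫‖ := by
        have h : ‖⟪prodState (Function.update a k u), ψ⟫‖ ≤ ‖⟪prodState a, ψ⟫‖ :=
          hamax hmemu
        rwa [hw u, hak] at h
      have huw : ‖⟪u, w⟫‖ = ‖w‖ := by
        have hne : ((‖w‖ : ℂ)) ≠ 0 := by
          exact_mod_cast ne_of_gt hwnorm
        have hval : ⟪u, w⟫ = ((‖w‖ : ℂ)) := by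
          rw [hu, inner_smul_left, inner_self_eq_norm_sq_to_K]
          simp only [map_inv₀, Complex.conj_ofReal]
          rw [sq]
          exact inv_mul_cancel_left₀ hne _
        rw [hval, Complex.norm_real, norm_norm]
      have hCS : ‖⟪a k, w⟫‖ = ‖a k‖ * ‖w‖ := by
        refine le_antisymm (norm_inner_le_norm _ _) ?_
        rw [ha1 k, one_mul, ← huw]
        exact hle
      have hak0 : a k ≠ 0 := by
        intro h
        have h1 := ha1 k
        rw [h, norm_zero] at h1
        exact one_ne_zero h1.symm
      obtain ⟨r, hr0, hrw⟩ := (norm_inner_eq_norm_iff hak0 hw0).mp hCS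
      rw [hw b, hrw, inner_smul_right, hb, mul_zero]
  · intro c hc
    exact hamax ((hmemS c).2 hc)
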